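/- Let v̂₀ ∈ ℝ^d be a unit vector, σ > 0, t ≥ 3, and r₁, r₂ ∈ [d] coordinate indices. Then (1/σ^d)·∫_{⟨y, v̂₀⟩ ≥ tσ} |y(r₁)·y(r₂)|·exp(−π‖y‖₂²/σ²) dy < (σ²/(16π))·exp(−t²). -/

import Mathlib

open Real MeasureTheory
open scoped RealInnerProductSpace

namespace Stmt8


lemma mul_exp_le {c : ℝ} (hc : 0 < c) {u : ℝ} (hu : 0 ≤ u) :
    u * Real.exp (-(c * u)) ≤ 1 / c := by
  have h1 : c * u ≤ Real.exp (c * u) := by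
    nlinarith [Real.add_one_le_exp (c * u)]
  have hE : Real.exp (c * u) * Real.exp (-(c * u)) = 1 := by
    rw [← Real.exp_add]; ring_nf; exact Real.exp_zero
  have hEpos : (0:ℝ) < Real.exp (-(c * u)) := Real.exp_pos _
  rw [le_div_iff₀ hc]
  nlinarith [mul_le_mul_of_nonneg_right h1 hEpos.le]

lemma integrable_g2 {c : ℝ} (hc : 0 < c) :
    Integrable (fun z : ℝ => z ^ 2 * Real.exp (-c * z ^ 2)) := by
  have h := integrable_rpow_mul_exp_neg_mul_sq hc (by norm_num : (-1:ℝ) < 2)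
  refine h.congr (Filter.Eventually.of_forall fun x => ?_)
  simp only [Real.rpow_two]

lemma integral_gauss_sigma {σ : ℝ} (hσ : 0 < σ) :
    ∫ z : ℝ, Real.exp (-(π / σ ^ 2) * z ^ 2) = σ := by
  rw [integral_gaussian]
  rw [show π / (π / σ ^ 2) = σ ^ 2 by
    field_simp]
  exact Real.sqrt_sq hσ.le

lemma int_gauss_le {σ : ℝ} (hσ : 0 < σ) :
    ∫ z : ℝ, Real.exp (-((π - 2) / σ ^ 2) * z ^ 2) ≤ 2 * σ := by
  rw [integral_gaussian]
  have harg : π / ((π - 2) / σ ^ 2) ≤ (2 * σ) ^ 2 := by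
    have h2 : 0 < (π - 2) / σ ^ 2 :=
      div_pos (by have := pi_gt_three; linarith) (by positivity)
    rw [div_le_iff₀ h2]
    have h3 : (2 * σ) ^ 2 * ((π - 2) / σ ^ 2) = 4 * (π - 2) := by
      field_simp; ring
    rw [h3]
    have := pi_gt_three
    linarith
  calc √(π / ((π - 2) / σ ^ 2)) ≤ √((2 * σ) ^ 2) := Real.sqrt_le_sqrt harg
    _ = 2 * σ := Real.sqrt_sq (by positivity)

lemma int_g2_le {σ : ℝ} (hσ : 0 < σ) :
    ∫ z : ℝ, z ^ 2 * Real.exp (-((π - 2) / σ ^ 2) * z ^ 2) ≤ 16 * σ ^ 3 := by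
  have hπ3 : (0:ℝ) < π - 3 := by have := pi_gt_d6; linarith
  have hc : 0 < (π - 3) / σ ^ 2 := by positivity
  have hptw : ∀ z : ℝ, z ^ 2 * Real.exp (-((π - 2) / σ ^ 2) * z ^ 2)
      ≤ 8 * σ ^ 2 * Real.exp (-(1 / σ ^ 2) * z ^ 2) := by
    intro z
    have h1 : Real.exp (-((π - 2) / σ ^ 2) * z ^ 2)
        = Real.exp (-((π - 3) / σ ^ 2) * z ^ 2) * Real.exp (-(1 / σ ^ 2) * z ^ 2) := by
      rw [← Real.exp_add]; ring_nf
    rw [h1, ← mul_assoc]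
    apply mul_le_mul_of_nonneg_right _ (Real.exp_pos _).le
    have hm := mul_exp_le hc (sq_nonneg z)
    calc z ^ 2 * Real.exp (-((π - 3) / σ ^ 2) * z ^ 2)
        = z ^ 2 * Real.exp (-((π - 3) / σ ^ 2 * z ^ 2)) := by ring_nf
      _ ≤ 1 / ((π - 3) / σ ^ 2) := hm
      _ = σ ^ 2 / (π - 3) := one_div_div _ _
      _ ≤ 8 * σ ^ 2 := by
          rw [div_le_iff₀ hπ3]
          nlinarith [pi_gt_d6, sq_nonneg σ]
  have hπ2 : (0:ℝ) < (π - 2) / σ ^ 2 :=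
    div_pos (by have := pi_gt_three; linarith) (by positivity)
  have hint1 := integrable_g2 hπ2
  have hint2 : Integrable (fun z : ℝ => 8 * σ ^ 2 * Real.exp (-(1 / σ ^ 2) * z ^ 2)) :=
    (integrable_exp_neg_mul_sq (by positivity)).const_mul _
  calc ∫ z : ℝ, z ^ 2 * Real.exp (-((π - 2) / σ ^ 2) * z ^ 2)
      ≤ ∫ z : ℝ, 8 * σ ^ 2 * Real.exp (-(1 / σ ^ 2) * z ^ 2) := integral_mono hint1 hint2 hptw
    _ = 8 * σ ^ 2 * ∫ z : ℝ, Real.exp (-(1 / σ ^ 2) * z ^ 2) := integral_const_mul _ _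
    _ ≤ 8 * σ ^ 2 * (2 * σ) := by
        apply mul_le_mul_of_nonneg_left _ (by positivity)
        rw [integral_gaussian]
        have harg : π / (1 / σ ^ 2) ≤ (2 * σ) ^ 2 := by
          rw [div_le_iff₀ (by positivity : (0:ℝ) < 1 / σ ^ 2)]
          have h3 : (2 * σ) ^ 2 * (1 / σ ^ 2) = 4 := by field_simp; ring
          rw [h3]
          exact pi_le_four
        calc √(π / (1 / σ ^ 2)) ≤ √((2 * σ) ^ 2) := Real.sqrt_le_sqrt harg
          _ = 2 * σ := Real.sqrt_sq (by positivity)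
    _ = 16 * σ ^ 3 := by ring




variable {σ t : ℝ} {d : ℕ}

lemma hπσ (hσ : 0 < σ) : (0:ℝ) < π / σ ^ 2 := by positivity

-- m2_le : full second moment
lemma m2_le (hσ : 0 < σ)
    (hB1 : ∫ z : ℝ, z ^ 2 * Real.exp (-((π - 2) / σ ^ 2) * z ^ 2) ≤ 16 * σ ^ 3) :
    ∫ z : ℝ, z ^ 2 * Real.exp (-(π / σ ^ 2) * z ^ 2) ≤ 16 * σ ^ 3 := by
  have hπ2 : (0:ℝ) < (π - 2) / σ ^ 2 :=
    div_pos (by have := pi_gt_three; linarith) (by positivity)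
  refine le_trans (integral_mono (integrable_g2 (hπσ hσ)) (integrable_g2 hπ2) fun z => ?_) hB1
  apply mul_le_mul_of_nonneg_left _ (sq_nonneg z)
  apply Real.exp_le_exp.mpr
  have hσ2 : (0:ℝ) < σ ^ 2 := by positivity
  have : (0:ℝ) ≤ z ^ 2 / σ ^ 2 := by positivity
  have h2 : -(π / σ ^ 2) * z ^ 2 = -((π-2) / σ ^ 2) * z ^ 2 - 2 * (z^2/σ^2) := by
    field_simp; ring
  nlinarith

lemma tail2_le (hσ : 0 < σ) (ht0 : 0 ≤ t)
    (hB1 : ∫ z : ℝ, z ^ 2 * Real.exp (-((π - 2) / σ ^ 2) * z ^ 2) ≤ 16 * σ ^ 3) :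
    ∫ z : ℝ, (Set.Ici (t * σ)).indicator
        (fun z => z ^ 2 * Real.exp (-(π / σ ^ 2) * z ^ 2)) z
      ≤ Real.exp (-(2 * t ^ 2)) * (16 * σ ^ 3) := by
  have hπ2 : (0:ℝ) < (π - 2) / σ ^ 2 :=
    div_pos (by have := pi_gt_three; linarith) (by positivity)
  have hσ2 : (0:ℝ) < σ ^ 2 := by positivity
  have hint1 : Integrable (fun z : ℝ => (Set.Ici (t * σ)).indicator
      (fun z => z ^ 2 * Real.exp (-(π / σ ^ 2) * z ^ 2)) z) := by
    exact (integrable_g2 (hπσ hσ)).indicator measurableSet_Ici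
  have hint2 : Integrable (fun z : ℝ =>
      Real.exp (-(2 * t ^ 2)) * (z ^ 2 * Real.exp (-((π - 2) / σ ^ 2) * z ^ 2))) :=
    (integrable_g2 hπ2).const_mul _
  have hptw : ∀ z : ℝ, (Set.Ici (t * σ)).indicator
      (fun z => z ^ 2 * Real.exp (-(π / σ ^ 2) * z ^ 2)) z
      ≤ Real.exp (-(2 * t ^ 2)) * (z ^ 2 * Real.exp (-((π - 2) / σ ^ 2) * z ^ 2)) := by
    intro z
    by_cases hz : z ∈ Set.Ici (t * σ)
    · rw [Set.indicator_of_mem hz]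
      have hz' : t * σ ≤ z := hz
      have hzsq : t ^ 2 * σ ^ 2 ≤ z ^ 2 := by nlinarith [mul_nonneg ht0 hσ.le]
      have hsplit : Real.exp (-(π / σ ^ 2) * z ^ 2)
          = Real.exp (-(2 / σ ^ 2) * z ^ 2) * Real.exp (-((π - 2) / σ ^ 2) * z ^ 2) := by
        rw [← Real.exp_add]; ring_nf
      rw [hsplit, ← mul_assoc, mul_comm (z ^ 2), mul_assoc]
      apply mul_le_mul_of_nonneg_right _ (by positivity)
      apply Real.exp_le_exp.mpr
      rw [neg_mul, neg_le_neg_iff, div_mul_eq_mul_div, le_div_iff₀ hσ2]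
      nlinarith
    · rw [Set.indicator_of_notMem hz]
      positivity
  calc _ ≤ ∫ z : ℝ, Real.exp (-(2 * t ^ 2)) * (z ^ 2 * Real.exp (-((π - 2) / σ ^ 2) * z ^ 2)) :=
        integral_mono hint1 hint2 hptw
    _ = Real.exp (-(2 * t ^ 2)) * ∫ z : ℝ, z ^ 2 * Real.exp (-((π - 2) / σ ^ 2) * z ^ 2) :=
        integral_const_mul _ _
    _ ≤ _ := mul_le_mul_of_nonneg_left hB1 (Real.exp_pos _).le

lemma tail0_le (hσ : 0 < σ) (ht0 : 0 ≤ t)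
    (hB2 : ∫ z : ℝ, Real.exp (-((π - 2) / σ ^ 2) * z ^ 2) ≤ 2 * σ) :
    ∫ z : ℝ, (Set.Ici (t * σ)).indicator
        (fun z => Real.exp (-(π / σ ^ 2) * z ^ 2)) z
      ≤ Real.exp (-(2 * t ^ 2)) * (2 * σ) := by
  have hπ2 : (0:ℝ) < (π - 2) / σ ^ 2 :=
    div_pos (by have := pi_gt_three; linarith) (by positivity)
  have hσ2 : (0:ℝ) < σ ^ 2 := by positivity
  have hint1 : Integrable (fun z : ℝ => (Set.Ici (t * σ)).indicator
      (fun z => Real.exp (-(π / σ ^ 2) * z ^ 2)) z) :=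
    (integrable_exp_neg_mul_sq (hπσ hσ)).indicator measurableSet_Ici
  have hint2 : Integrable (fun z : ℝ =>
      Real.exp (-(2 * t ^ 2)) * Real.exp (-((π - 2) / σ ^ 2) * z ^ 2)) :=
    (integrable_exp_neg_mul_sq hπ2).const_mul _
  have hptw : ∀ z : ℝ, (Set.Ici (t * σ)).indicator
      (fun z => Real.exp (-(π / σ ^ 2) * z ^ 2)) z
      ≤ Real.exp (-(2 * t ^ 2)) * Real.exp (-((π - 2) / σ ^ 2) * z ^ 2) := by
    intro z
    by_cases hz : z ∈ Set.Ici (t * σ)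
    · rw [Set.indicator_of_mem hz]
      have hz' : t * σ ≤ z := hz
      have hzsq : t ^ 2 * σ ^ 2 ≤ z ^ 2 := by nlinarith [mul_nonneg ht0 hσ.le]
      have hsplit : Real.exp (-(π / σ ^ 2) * z ^ 2)
          = Real.exp (-(2 / σ ^ 2) * z ^ 2) * Real.exp (-((π - 2) / σ ^ 2) * z ^ 2) := by
        rw [← Real.exp_add]; ring_nf
      rw [hsplit]
      apply mul_le_mul_of_nonneg_right _ (Real.exp_pos _).le
      apply Real.exp_le_exp.mpr
      rw [neg_mul, neg_le_neg_iff, div_mul_eq_mul_div, le_div_iff₀ hσ2]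
      nlinarith
    · rw [Set.indicator_of_notMem hz]
      positivity
  calc _ ≤ ∫ z : ℝ, Real.exp (-(2 * t ^ 2)) * Real.exp (-((π - 2) / σ ^ 2) * z ^ 2) :=
        integral_mono hint1 hint2 hptw
    _ = Real.exp (-(2 * t ^ 2)) * ∫ z : ℝ, Real.exp (-((π - 2) / σ ^ 2) * z ^ 2) :=
        integral_const_mul _ _
    _ ≤ _ := mul_le_mul_of_nonneg_left hB2 (Real.exp_pos _).le




lemma norm_sq_eq (x : EuclideanSpace ℝ (Fin d)) : ‖x‖ ^ 2 = ∑ i, (x i) ^ 2 := by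
  rw [EuclideanSpace.norm_eq, Real.sq_sqrt (by positivity)]
  simp [sq_abs]

lemma exp_factor (b : OrthonormalBasis (Fin d) ℝ (EuclideanSpace ℝ (Fin d)))
    (y : EuclideanSpace ℝ (Fin d)) :
    Real.exp (-π * ‖y‖ ^ 2 / σ ^ 2) = ∏ i, Real.exp (-(π / σ ^ 2) * (b.repr y i) ^ 2) := by
  rw [← Real.exp_sum]
  congr 1
  have hn : ‖y‖ ^ 2 = ∑ i, (b.repr y i) ^ 2 := by
    rw [← LinearIsometryEquiv.norm_map b.repr y, norm_sq_eq]
  rw [hn, Finset.mul_sum, Finset.sum_div]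
  exact Finset.sum_congr rfl fun i _ => by ring

lemma basis_integral_prod (b : OrthonormalBasis (Fin d) ℝ (EuclideanSpace ℝ (Fin d)))
    (g : Fin d → ℝ → ℝ) :
    ∫ y : EuclideanSpace ℝ (Fin d), ∏ i, g i (b.repr y i) = ∏ i, ∫ z, g i z := by
  calc ∫ y : EuclideanSpace ℝ (Fin d), ∏ i, g i (b.repr y i)
      = ∫ x : EuclideanSpace ℝ (Fin d), ∏ i, g i (x i) :=
        b.measurePreserving_measurableEquiv.integral_comp'
          (fun x : EuclideanSpace ℝ (Fin d) => ∏ i, g i (x i))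
    _ = ∫ x : Fin d → ℝ, ∏ i, g i (x i) :=
        (EuclideanSpace.volume_preserving_symm_measurableEquiv_toLp (Fin d)).integral_comp'
          (fun x : Fin d → ℝ => ∏ i, g i (x i))
    _ = ∏ i, ∫ z, g i z := integral_fintype_prod_eq_prod (f := g)

lemma integrable_of_prod (b : OrthonormalBasis (Fin d) ℝ (EuclideanSpace ℝ (Fin d)))
    (g : Fin d → ℝ → ℝ) (hg : ∀ i, Integrable (g i)) :
    Integrable (fun y : EuclideanSpace ℝ (Fin d) => ∏ i, g i (b.repr y i)) := by
  have h0 : Integrable (fun x : Fin d → ℝ => ∏ i, g i (x i)) := Integrable.fintype_prod hg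
  have h1 : Integrable (fun x : EuclideanSpace ℝ (Fin d) => ∏ i, g i (x i)) :=
    ((EuclideanSpace.volume_preserving_symm_measurableEquiv_toLp (Fin d)).integrable_comp_emb
      (MeasurableEquiv.measurableEmbedding _)).mpr h0
  exact (b.measurePreserving_measurableEquiv.integrable_comp_emb
      (MeasurableEquiv.measurableEmbedding _)).mpr h1

lemma measurableSet_halfspace (v : EuclideanSpace ℝ (Fin d)) (c : ℝ) :
    MeasurableSet {y : EuclideanSpace ℝ (Fin d) | c ≤ ⟪y, v⟫} := by
  have hc : Continuous fun y : EuclideanSpace ℝ (Fin d) => ⟪y, v⟫ :=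
    continuous_id.inner continuous_const
  exact (isClosed_le continuous_const hc).measurableSet




lemma prod_repr_eq (b : OrthonormalBasis (Fin d) ℝ (EuclideanSpace ℝ (Fin d)))
    (i₀ : Fin d) (q : ℝ → ℝ) (y : EuclideanSpace ℝ (Fin d)) :
    ∏ i, (if i = i₀ then q else fun z => Real.exp (-(π / σ ^ 2) * z ^ 2)) (b.repr y i)
      = q (b.repr y i₀)
        * ∏ i ∈ Finset.univ.erase i₀, Real.exp (-(π / σ ^ 2) * (b.repr y i) ^ 2) := by
  classical
  rw [← Finset.mul_prod_erase Finset.univ _ (Finset.mem_univ i₀)]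
  simp only [if_pos rfl]
  congr 1
  refine Finset.prod_congr rfl fun i hi => ?_
  rw [if_neg (Finset.ne_of_mem_erase hi)]

lemma prod_int_eq (hσ : 0 < σ) (i₀ : Fin d) (q : ℝ → ℝ) :
    (∏ i : Fin d, ∫ z, (if i = i₀ then q else fun z => Real.exp (-(π / σ ^ 2) * z ^ 2)) z)
      = (∫ z, q z) * σ ^ (d - 1) := by
  classical
  rw [← Finset.mul_prod_erase Finset.univ _ (Finset.mem_univ i₀)]
  simp only [if_pos rfl]
  congr 1
  have h : ∀ i ∈ Finset.univ.erase i₀,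
      (∫ z, (if i = i₀ then q else fun z => Real.exp (-(π / σ ^ 2) * z ^ 2)) z) = σ := by
    intro i hi
    rw [if_neg (Finset.ne_of_mem_erase hi)]
    exact integral_gauss_sigma hσ
  rw [Finset.prod_congr rfl h, Finset.prod_const,
    Finset.card_erase_of_mem (Finset.mem_univ i₀), Finset.card_univ, Fintype.card_fin]

lemma termA_integrable (hσ : 0 < σ) (v : EuclideanSpace ℝ (Fin d))
    (b : OrthonormalBasis (Fin d) ℝ (EuclideanSpace ℝ (Fin d))) (i₀ : Fin d) (hb : b i₀ = v) :
    Integrable (fun y : EuclideanSpace ℝ (Fin d) =>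
      ⟪y, v⟫ ^ 2 * Real.exp (-π * ‖y‖ ^ 2 / σ ^ 2)) := by
  classical
  have hcoord : ∀ y : EuclideanSpace ℝ (Fin d), b.repr y i₀ = ⟪y, v⟫ := fun y => by
    rw [OrthonormalBasis.repr_apply_apply, hb, real_inner_comm]
  have hmatch : (fun y : EuclideanSpace ℝ (Fin d) =>
      ⟪y, v⟫ ^ 2 * Real.exp (-π * ‖y‖ ^ 2 / σ ^ 2))
      = fun y => ∏ i, (if i = i₀ then (fun z : ℝ => z ^ 2 * Real.exp (-(π / σ ^ 2) * z ^ 2))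
          else fun z => Real.exp (-(π / σ ^ 2) * z ^ 2)) (b.repr y i) := by
    funext y
    rw [prod_repr_eq b i₀ _ y, hcoord y, exp_factor b y,
      ← Finset.mul_prod_erase Finset.univ _ (Finset.mem_univ i₀), hcoord y]
    ring
  rw [hmatch]
  refine integrable_of_prod b _ fun i => ?_
  by_cases h : i = i₀
  · rw [if_pos h]
    exact integrable_g2 (by positivity)
  · rw [if_neg h]
    exact integrable_exp_neg_mul_sq (by positivity)

lemma termA_eq (hσ : 0 < σ) (v : EuclideanSpace ℝ (Fin d))
    (b : OrthonormalBasis (Fin d) ℝ (EuclideanSpace ℝ (Fin d))) (i₀ : Fin d) (hb : b i₀ = v) :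
    ∫ y in {y : EuclideanSpace ℝ (Fin d) | t * σ ≤ ⟪y, v⟫},
        ⟪y, v⟫ ^ 2 * Real.exp (-π * ‖y‖ ^ 2 / σ ^ 2)
      = (∫ z, (Set.Ici (t * σ)).indicator
            (fun z => z ^ 2 * Real.exp (-(π / σ ^ 2) * z ^ 2)) z) * σ ^ (d - 1) := by
  classical
  have hcoord : ∀ y : EuclideanSpace ℝ (Fin d), b.repr y i₀ = ⟪y, v⟫ := fun y => by
    rw [OrthonormalBasis.repr_apply_apply, hb, real_inner_comm]
  have hmatch : ∀ y : EuclideanSpace ℝ (Fin d),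
      ({y : EuclideanSpace ℝ (Fin d) | t * σ ≤ ⟪y, v⟫}).indicator
        (fun y => ⟪y, v⟫ ^ 2 * Real.exp (-π * ‖y‖ ^ 2 / σ ^ 2)) y
      = ∏ i, (if i = i₀ then (Set.Ici (t * σ)).indicator
            (fun z => z ^ 2 * Real.exp (-(π / σ ^ 2) * z ^ 2))
          else fun z => Real.exp (-(π / σ ^ 2) * z ^ 2)) (b.repr y i) := by
    intro y
    rw [prod_repr_eq b i₀ _ y, hcoord y]
    by_cases hy : t * σ ≤ ⟪y, v⟫
    · rw [Set.indicator_of_mem (by exact hy), Set.indicator_of_mem (by exact hy),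
        exp_factor b y, ← Finset.mul_prod_erase Finset.univ _ (Finset.mem_univ i₀), hcoord y]
      ring
    · rw [Set.indicator_of_notMem (by exact hy), Set.indicator_of_notMem (by exact hy)]
      simp
  rw [← integral_indicator (measurableSet_halfspace v (t * σ))]
  simp_rw [hmatch]
  rw [basis_integral_prod b _, prod_int_eq hσ i₀ _]


lemma prod_repr_eq2 (b : OrthonormalBasis (Fin d) ℝ (EuclideanSpace ℝ (Fin d)))
    (i₀ i₁ : Fin d) (hne : i₁ ≠ i₀) (q₀ q₁ : ℝ → ℝ) (y : EuclideanSpace ℝ (Fin d)) :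
    ∏ i, (if i = i₀ then q₀ else if i = i₁ then q₁
        else fun z => Real.exp (-(π / σ ^ 2) * z ^ 2)) (b.repr y i)
      = q₀ (b.repr y i₀) * (q₁ (b.repr y i₁)
        * ∏ i ∈ (Finset.univ.erase i₀).erase i₁,
            Real.exp (-(π / σ ^ 2) * (b.repr y i) ^ 2)) := by
  classical
  rw [← Finset.mul_prod_erase Finset.univ _ (Finset.mem_univ i₀),
    ← Finset.mul_prod_erase _ _ (Finset.mem_erase.mpr ⟨hne, Finset.mem_univ i₁⟩)]
  rw [if_pos rfl, if_neg hne, if_pos rfl]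
  congr 2
  refine Finset.prod_congr rfl fun i hi => ?_
  have h1 : i ≠ i₁ := (Finset.mem_erase.mp hi).1
  have h0 : i ≠ i₀ := Finset.ne_of_mem_erase (Finset.mem_erase.mp hi).2
  rw [if_neg h0, if_neg h1]

lemma exp_prod_split2 (b : OrthonormalBasis (Fin d) ℝ (EuclideanSpace ℝ (Fin d)))
    (i₀ i₁ : Fin d) (hne : i₁ ≠ i₀) (y : EuclideanSpace ℝ (Fin d)) :
    ∏ i, Real.exp (-(π / σ ^ 2) * (b.repr y i) ^ 2)
      = Real.exp (-(π / σ ^ 2) * (b.repr y i₀) ^ 2)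
        * (Real.exp (-(π / σ ^ 2) * (b.repr y i₁) ^ 2)
          * ∏ i ∈ (Finset.univ.erase i₀).erase i₁,
              Real.exp (-(π / σ ^ 2) * (b.repr y i) ^ 2)) := by
  rw [← Finset.mul_prod_erase Finset.univ _ (Finset.mem_univ i₀),
    ← Finset.mul_prod_erase _ _ (Finset.mem_erase.mpr ⟨hne, Finset.mem_univ i₁⟩)]

lemma prod_int_eq2 (hσ : 0 < σ) (i₀ i₁ : Fin d) (hne : i₁ ≠ i₀) (q₀ q₁ : ℝ → ℝ) :
    (∏ i : Fin d, ∫ z, (if i = i₀ then q₀ else if i = i₁ then q₁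
        else fun z => Real.exp (-(π / σ ^ 2) * z ^ 2)) z)
      = (∫ z, q₀ z) * ((∫ z, q₁ z) * σ ^ (d - 2)) := by
  classical
  rw [← Finset.mul_prod_erase Finset.univ _ (Finset.mem_univ i₀),
    ← Finset.mul_prod_erase _ _ (Finset.mem_erase.mpr ⟨hne, Finset.mem_univ i₁⟩)]
  rw [if_pos rfl, if_neg hne, if_pos rfl]
  congr 2
  have h : ∀ i ∈ (Finset.univ.erase i₀).erase i₁,
      (∫ z, (if i = i₀ then q₀ else if i = i₁ then q₁
        else fun z => Real.exp (-(π / σ ^ 2) * z ^ 2)) z) = σ := by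
    intro i hi
    have h1 : i ≠ i₁ := (Finset.mem_erase.mp hi).1
    have h0 : i ≠ i₀ := Finset.ne_of_mem_erase (Finset.mem_erase.mp hi).2
    rw [if_neg h0, if_neg h1]
    exact integral_gauss_sigma hσ
  rw [Finset.prod_congr rfl h, Finset.prod_const,
    Finset.card_erase_of_mem (Finset.mem_erase.mpr ⟨hne, Finset.mem_univ i₁⟩),
    Finset.card_erase_of_mem (Finset.mem_univ i₀), Finset.card_univ, Fintype.card_fin]
  congr 1

lemma termB_integrable (hσ : 0 < σ) (v : EuclideanSpace ℝ (Fin d))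
    (b : OrthonormalBasis (Fin d) ℝ (EuclideanSpace ℝ (Fin d))) (i₀ i₁ : Fin d)
    (hne : i₁ ≠ i₀) (hb₀ : b i₀ = v) (u : EuclideanSpace ℝ (Fin d)) (hb₁ : b i₁ = u) :
    Integrable (fun y : EuclideanSpace ℝ (Fin d) =>
      ⟪y, u⟫ ^ 2 * Real.exp (-π * ‖y‖ ^ 2 / σ ^ 2)) := by
  classical
  have hcoord₀ : ∀ y : EuclideanSpace ℝ (Fin d), b.repr y i₀ = ⟪y, v⟫ := fun y => by
    rw [OrthonormalBasis.repr_apply_apply, hb₀, real_inner_comm]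
  have hcoord₁ : ∀ y : EuclideanSpace ℝ (Fin d), b.repr y i₁ = ⟪y, u⟫ := fun y => by
    rw [OrthonormalBasis.repr_apply_apply, hb₁, real_inner_comm]
  have hmatch : (fun y : EuclideanSpace ℝ (Fin d) =>
      ⟪y, u⟫ ^ 2 * Real.exp (-π * ‖y‖ ^ 2 / σ ^ 2))
      = fun y => ∏ i, (if i = i₀ then (fun z : ℝ => Real.exp (-(π / σ ^ 2) * z ^ 2))
          else if i = i₁ then (fun z : ℝ => z ^ 2 * Real.exp (-(π / σ ^ 2) * z ^ 2))
          else fun z => Real.exp (-(π / σ ^ 2) * z ^ 2)) (b.repr y i) := by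
    funext y
    rw [prod_repr_eq2 b i₀ i₁ hne _ _ y, exp_factor b y, exp_prod_split2 b i₀ i₁ hne y,
      hcoord₀ y, hcoord₁ y]
    ring
  rw [hmatch]
  refine integrable_of_prod b _ fun i => ?_
  by_cases h0 : i = i₀
  · rw [if_pos h0]
    exact integrable_exp_neg_mul_sq (by positivity)
  · rw [if_neg h0]
    by_cases h1 : i = i₁
    · rw [if_pos h1]
      exact integrable_g2 (by positivity)
    · rw [if_neg h1]
      exact integrable_exp_neg_mul_sq (by positivity)

lemma termB_eq (hσ : 0 < σ) (v : EuclideanSpace ℝ (Fin d))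
    (b : OrthonormalBasis (Fin d) ℝ (EuclideanSpace ℝ (Fin d))) (i₀ i₁ : Fin d)
    (hne : i₁ ≠ i₀) (hb₀ : b i₀ = v) (u : EuclideanSpace ℝ (Fin d)) (hb₁ : b i₁ = u) :
    ∫ y in {y : EuclideanSpace ℝ (Fin d) | t * σ ≤ ⟪y, v⟫},
        ⟪y, u⟫ ^ 2 * Real.exp (-π * ‖y‖ ^ 2 / σ ^ 2)
      = (∫ z, (Set.Ici (t * σ)).indicator (fun z => Real.exp (-(π / σ ^ 2) * z ^ 2)) z)
        * ((∫ z, z ^ 2 * Real.exp (-(π / σ ^ 2) * z ^ 2)) * σ ^ (d - 2)) := by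
  classical
  have hcoord₀ : ∀ y : EuclideanSpace ℝ (Fin d), b.repr y i₀ = ⟪y, v⟫ := fun y => by
    rw [OrthonormalBasis.repr_apply_apply, hb₀, real_inner_comm]
  have hcoord₁ : ∀ y : EuclideanSpace ℝ (Fin d), b.repr y i₁ = ⟪y, u⟫ := fun y => by
    rw [OrthonormalBasis.repr_apply_apply, hb₁, real_inner_comm]
  have hmatch : ∀ y : EuclideanSpace ℝ (Fin d),
      ({y : EuclideanSpace ℝ (Fin d) | t * σ ≤ ⟪y, v⟫}).indicator
        (fun y => ⟪y, u⟫ ^ 2 * Real.exp (-π * ‖y‖ ^ 2 / σ ^ 2)) y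
      = ∏ i, (if i = i₀ then (Set.Ici (t * σ)).indicator
            (fun z => Real.exp (-(π / σ ^ 2) * z ^ 2))
          else if i = i₁ then (fun z : ℝ => z ^ 2 * Real.exp (-(π / σ ^ 2) * z ^ 2))
          else fun z => Real.exp (-(π / σ ^ 2) * z ^ 2)) (b.repr y i) := by
    intro y
    rw [prod_repr_eq2 b i₀ i₁ hne _ _ y, hcoord₀ y, hcoord₁ y]
    by_cases hy : t * σ ≤ ⟪y, v⟫
    · rw [Set.indicator_of_mem (by exact hy), Set.indicator_of_mem (by exact hy),
        exp_factor b y, exp_prod_split2 b i₀ i₁ hne y, hcoord₀ y, hcoord₁ y]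
      ring
    · rw [Set.indicator_of_notMem (by exact hy), Set.indicator_of_notMem (by exact hy)]
      simp
  rw [← integral_indicator (measurableSet_halfspace v (t * σ))]
  simp_rw [hmatch]
  rw [basis_integral_prod b _, prod_int_eq2 hσ i₀ i₁ hne _ _]

lemma exists_basis_single (v : EuclideanSpace ℝ (Fin d)) (hv : ‖v‖ = 1) (i₀ : Fin d) :
    ∃ b : OrthonormalBasis (Fin d) ℝ (EuclideanSpace ℝ (Fin d)), b i₀ = v := by
  classical
  have hON : Orthonormal ℝ (({i₀} : Set (Fin d)).restrict (fun _ => v)) := by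
    constructor
    · intro i; simpa [Set.restrict] using hv
    · rintro ⟨i, hi⟩ ⟨j, hj⟩ hij
      simp only [Set.mem_singleton_iff] at hi hj
      exact absurd (Subtype.ext (hi.trans hj.symm)) hij
  obtain ⟨b, hb⟩ := hON.exists_orthonormalBasis_extension_of_card_eq (by simp)
  exact ⟨b, hb i₀ rfl⟩

lemma exists_basis_pair (v u : EuclideanSpace ℝ (Fin d)) (hv : ‖v‖ = 1) (hu : ‖u‖ = 1)
    (huv : ⟪u, v⟫ = 0) :
    ∃ (i₀ i₁ : Fin d) (b : OrthonormalBasis (Fin d) ℝ (EuclideanSpace ℝ (Fin d))),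
      i₁ ≠ i₀ ∧ b i₀ = v ∧ b i₁ = u ∧ 2 ≤ d := by
  classical
  have hvu : ⟪v, u⟫ = 0 := by rw [real_inner_comm]; exact huv
  have hON2 : Orthonormal ℝ ![v, u] := by
    constructor
    · intro i; fin_cases i <;> simp [hv, hu]
    · intro i j hij; fin_cases i <;> fin_cases j <;> simp_all
  have hd : 2 ≤ d := by
    have h := hON2.linearIndependent.fintype_card_le_finrank
    simpa using h
  set i₀ : Fin d := ⟨0, by omega⟩ with hi₀
  set i₁ : Fin d := ⟨1, by omega⟩ with hi₁
  have hne : i₁ ≠ i₀ := by simp [hi₀, hi₁, Fin.ext_iff]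
  have hON : Orthonormal ℝ (({i₀, i₁} : Set (Fin d)).restrict
      (fun i => if i = i₀ then v else u)) := by
    constructor
    · rintro ⟨i, hi⟩
      simp only [Set.restrict, Set.domRestrict_apply]
      by_cases h : i = i₀
      · rw [if_pos h]; exact hv
      · rw [if_neg h]; exact hu
    · rintro ⟨i, hi⟩ ⟨j, hj⟩ hij
      have hij' : i ≠ j := fun h => hij (Subtype.ext h)
      simp only [Set.mem_insert_iff, Set.mem_singleton_iff] at hi hj
      simp only [Set.restrict, Set.domRestrict_apply]
      rcases hi with rfl | rfl <;> rcases hj with rfl | rfl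
      · exact absurd rfl hij'
      · rw [if_pos rfl, if_neg hne]; exact hvu
      · rw [if_neg hne, if_pos rfl]; exact huv
      · exact absurd rfl hij'
  obtain ⟨b, hb⟩ := hON.exists_orthonormalBasis_extension_of_card_eq (by simp)
  refine ⟨i₀, i₁, b, hne, ?_, ?_, hd⟩
  · rw [hb i₀ (by simp)]; simp
  · rw [hb i₁ (by simp)]
    exact if_neg hne

lemma setint_nonneg_uw (w : EuclideanSpace ℝ (Fin d)) (A : Set (EuclideanSpace ℝ (Fin d)))
    (hA : MeasurableSet A) :
    0 ≤ ∫ y in A, ⟪y, w⟫ ^ 2 * Real.exp (-π * ‖y‖ ^ 2 / σ ^ 2) :=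
  setIntegral_nonneg hA fun y _ => by positivity

lemma termA_bound (hσ : 0 < σ) (ht0 : 0 ≤ t) (hd1 : 1 ≤ d)
    (v : EuclideanSpace ℝ (Fin d)) (hv : ‖v‖ = 1) (i₀ : Fin d) :
    Integrable (fun y : EuclideanSpace ℝ (Fin d) =>
      ⟪y, v⟫ ^ 2 * Real.exp (-π * ‖y‖ ^ 2 / σ ^ 2)) ∧
    ∫ y in {y : EuclideanSpace ℝ (Fin d) | t * σ ≤ ⟪y, v⟫},
        ⟪y, v⟫ ^ 2 * Real.exp (-π * ‖y‖ ^ 2 / σ ^ 2)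
      ≤ 16 * (σ ^ d * σ ^ 2) * Real.exp (-(2 * t ^ 2)) := by
  obtain ⟨b, hb⟩ := exists_basis_single v hv i₀
  refine ⟨termA_integrable hσ v b i₀ hb, ?_⟩
  rw [termA_eq hσ v b i₀ hb]
  have hI2 := tail2_le hσ ht0 (int_g2_le hσ)
  have hp : σ ^ (d - 1) * σ ^ 3 = σ ^ d * σ ^ 2 := by
    rw [← pow_add, ← pow_add]
    congr 1
    omega
  calc (∫ z, (Set.Ici (t * σ)).indicator
          (fun z => z ^ 2 * Real.exp (-(π / σ ^ 2) * z ^ 2)) z) * σ ^ (d - 1)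
      ≤ (Real.exp (-(2 * t ^ 2)) * (16 * σ ^ 3)) * σ ^ (d - 1) :=
        mul_le_mul_of_nonneg_right hI2 (by positivity)
    _ = 16 * (σ ^ (d - 1) * σ ^ 3) * Real.exp (-(2 * t ^ 2)) := by ring
    _ = 16 * (σ ^ d * σ ^ 2) * Real.exp (-(2 * t ^ 2)) := by rw [hp]

lemma termW_bound (hσ : 0 < σ) (ht0 : 0 ≤ t)
    (v : EuclideanSpace ℝ (Fin d)) (hv : ‖v‖ = 1)
    (w : EuclideanSpace ℝ (Fin d)) (hwv : ⟪w, v⟫ = 0) (hw : ‖w‖ ≤ 1) :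
    Integrable (fun y : EuclideanSpace ℝ (Fin d) =>
      ⟪y, w⟫ ^ 2 * Real.exp (-π * ‖y‖ ^ 2 / σ ^ 2)) ∧
    ∫ y in {y : EuclideanSpace ℝ (Fin d) | t * σ ≤ ⟪y, v⟫},
        ⟪y, w⟫ ^ 2 * Real.exp (-π * ‖y‖ ^ 2 / σ ^ 2)
      ≤ 32 * (σ ^ d * σ ^ 2) * Real.exp (-(2 * t ^ 2)) := by
  rcases eq_or_ne w 0 with rfl | hw0
  · have hzero : (fun y : EuclideanSpace ℝ (Fin d) =>
        ⟪y, (0 : EuclideanSpace ℝ (Fin d))⟫ ^ 2 * Real.exp (-π * ‖y‖ ^ 2 / σ ^ 2))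
        = fun _ => (0:ℝ) := by
      funext y; simp
    constructor
    · rw [hzero]; exact integrable_zero _ _ _
    · rw [show (∫ y in {y : EuclideanSpace ℝ (Fin d) | t * σ ≤ ⟪y, v⟫},
          ⟪y, (0 : EuclideanSpace ℝ (Fin d))⟫ ^ 2 * Real.exp (-π * ‖y‖ ^ 2 / σ ^ 2)) = 0 by
        simp [hzero]]
      positivity
  · have hnorm0 : (‖w‖ : ℝ) ≠ 0 := norm_ne_zero_iff.mpr hw0
    set u : EuclideanSpace ℝ (Fin d) := ‖w‖⁻¹ • w with hu_def
    have hu : ‖u‖ = 1 := norm_smul_inv_norm hw0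
    have huv : ⟪u, v⟫ = 0 := by
      rw [hu_def, real_inner_smul_left, hwv, mul_zero]
    obtain ⟨i₀, i₁, b, hne, hb₀, hb₁, hd⟩ := exists_basis_pair v u hv hu huv
    have hwu : ∀ y : EuclideanSpace ℝ (Fin d), ⟪y, w⟫ = ‖w‖ * ⟪y, u⟫ := by
      intro y
      rw [hu_def, real_inner_smul_right]
      field_simp
    have hintu := termB_integrable hσ v b i₀ i₁ hne hb₀ u hb₁
    have hrw : (fun y : EuclideanSpace ℝ (Fin d) =>
        ⟪y, w⟫ ^ 2 * Real.exp (-π * ‖y‖ ^ 2 / σ ^ 2))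
        = fun y => ‖w‖ ^ 2 * (⟪y, u⟫ ^ 2 * Real.exp (-π * ‖y‖ ^ 2 / σ ^ 2)) := by
      funext y; rw [hwu y]; ring
    constructor
    · rw [hrw]; exact hintu.const_mul _
    · have hw2 : ‖w‖ ^ 2 ≤ 1 := by nlinarith [norm_nonneg w]
      have hXnonneg := setint_nonneg_uw (σ := σ) u _ (measurableSet_halfspace v (t * σ))
      have hXbound : ∫ y in {y : EuclideanSpace ℝ (Fin d) | t * σ ≤ ⟪y, v⟫},
          ⟪y, u⟫ ^ 2 * Real.exp (-π * ‖y‖ ^ 2 / σ ^ 2)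
          ≤ 32 * (σ ^ d * σ ^ 2) * Real.exp (-(2 * t ^ 2)) := by
        rw [termB_eq hσ v b i₀ i₁ hne hb₀ u hb₁]
        have hI0 := tail0_le hσ ht0 (int_gauss_le hσ)
        have hI2 := m2_le hσ (int_g2_le hσ)
        have h2nonneg : 0 ≤ ∫ z, z ^ 2 * Real.exp (-(π / σ ^ 2) * z ^ 2) :=
          integral_nonneg fun z => by positivity
        have h0nonneg : 0 ≤ ∫ z, (Set.Ici (t * σ)).indicator
            (fun z => Real.exp (-(π / σ ^ 2) * z ^ 2)) z :=
          integral_nonneg fun z => Set.indicator_nonneg (fun z _ => (Real.exp_pos _).le) z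
        have hp : σ ^ (d - 2) * σ ^ 4 = σ ^ d * σ ^ 2 := by
          rw [← pow_add, ← pow_add]
          congr 1
          omega
        calc (∫ z, (Set.Ici (t * σ)).indicator
                (fun z => Real.exp (-(π / σ ^ 2) * z ^ 2)) z)
              * ((∫ z, z ^ 2 * Real.exp (-(π / σ ^ 2) * z ^ 2)) * σ ^ (d - 2))
            ≤ (Real.exp (-(2 * t ^ 2)) * (2 * σ)) * ((16 * σ ^ 3) * σ ^ (d - 2)) := by
              apply mul_le_mul hI0 (mul_le_mul_of_nonneg_right hI2 (by positivity))
                (mul_nonneg h2nonneg (by positivity)) (by positivity)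
          _ = 32 * (σ ^ (d - 2) * σ ^ 4) * Real.exp (-(2 * t ^ 2)) := by ring
          _ = 32 * (σ ^ d * σ ^ 2) * Real.exp (-(2 * t ^ 2)) := by rw [hp]
      calc ∫ y in {y : EuclideanSpace ℝ (Fin d) | t * σ ≤ ⟪y, v⟫},
              ⟪y, w⟫ ^ 2 * Real.exp (-π * ‖y‖ ^ 2 / σ ^ 2)
          = ‖w‖ ^ 2 * ∫ y in {y : EuclideanSpace ℝ (Fin d) | t * σ ≤ ⟪y, v⟫},
              ⟪y, u⟫ ^ 2 * Real.exp (-π * ‖y‖ ^ 2 / σ ^ 2) := by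
            simp_rw [hrw]
            exact integral_const_mul _ _
        _ ≤ ∫ y in {y : EuclideanSpace ℝ (Fin d) | t * σ ≤ ⟪y, v⟫},
              ⟪y, u⟫ ^ 2 * Real.exp (-π * ‖y‖ ^ 2 / σ ^ 2) :=
            mul_le_of_le_one_left hXnonneg hw2
        _ ≤ _ := hXbound

end Stmt8

set_option maxHeartbeats 1000000 in
open Stmt8 in
/-- Truncated second-moment bound over a Gaussian half-space: for a unit vector `v̂₀`,
coordinates `r₁ r₂` and `t ≥ 3`,
`σ^{-d} ∫_{⟨y,v̂₀⟩ ≥ tσ} |y(r₁)y(r₂)| e^{-π‖y‖²/σ²} dy < (σ²/16π) e^{-t²}`. -/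
theorem stmt_8 (d : ℕ) (v : EuclideanSpace ℝ (Fin d)) (hv : ‖v‖ = 1) (σ t : ℝ)
    (hσ : 0 < σ) (ht : 3 ≤ t) (r₁ r₂ : Fin d) :
    (1 / σ ^ d) * ∫ y in {y : EuclideanSpace ℝ (Fin d) | t * σ ≤ ⟪y, v⟫},
        |y r₁ * y r₂| * Real.exp (-π * ‖y‖ ^ 2 / σ ^ 2) <
      (σ ^ 2 / (16 * π)) * Real.exp (-t ^ 2) := by
  classical
  have ht0 : (0:ℝ) ≤ t := by linarith
  have hd1 : 1 ≤ d := r₁.pos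
  have hA : MeasurableSet {y : EuclideanSpace ℝ (Fin d) | t * σ ≤ ⟪y, v⟫} :=
    measurableSet_halfspace v (t * σ)
  have hvv : ⟪v, v⟫ = 1 := by
    rw [real_inner_self_eq_norm_sq, hv]; norm_num
  have hsum1 : ∑ i, (v i) ^ 2 = 1 := by
    have := norm_sq_eq v
    rw [hv] at this
    simpa using this.symm
  have hvr2 : ∀ r : Fin d, (v r) ^ 2 ≤ 1 := by
    intro r
    have h1 : (v r) ^ 2 ≤ ∑ i, (v i) ^ 2 :=
      Finset.single_le_sum (f := fun i => (v i) ^ 2) (fun i _ => sq_nonneg _)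
        (Finset.mem_univ r)
    linarith
  set w : Fin d → EuclideanSpace ℝ (Fin d) :=
    fun r => EuclideanSpace.single r (1:ℝ) - (v r) • v with hw_def
  have hw_inner : ∀ (r : Fin d) (y : EuclideanSpace ℝ (Fin d)),
      ⟪y, w r⟫ = y r - v r * ⟪y, v⟫ := by
    intro r y
    rw [hw_def]
    rw [inner_sub_right, real_inner_smul_right, EuclideanSpace.inner_single_right]
    norm_num
  have hw_perp : ∀ r : Fin d, ⟪w r, v⟫ = 0 := by
    intro r
    rw [hw_def]
    rw [inner_sub_left, real_inner_smul_left, EuclideanSpace.inner_single_left, hvv]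
    norm_num
  have hw_norm : ∀ r : Fin d, ‖w r‖ ≤ 1 := by
    intro r
    have h2 : ‖w r‖ ^ 2 = 1 - (v r) ^ 2 := by
      rw [← real_inner_self_eq_norm_sq]
      have h4 := hw_inner r (w r)
      rw [hw_perp r, mul_zero, sub_zero] at h4
      rw [h4]
      have h5 : (w r) r = 1 - v r * v r := by
        simp [hw_def, EuclideanSpace.single_apply]
      rw [h5]
      ring
    nlinarith [norm_nonneg (w r), hvr2 r]
  -- pointwise bound
  have hpt : ∀ y : EuclideanSpace ℝ (Fin d),
      |y r₁ * y r₂| * Real.exp (-π * ‖y‖ ^ 2 / σ ^ 2)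
        ≤ (2 * ⟪y, v⟫ ^ 2 + ⟪y, w r₁⟫ ^ 2 + ⟪y, w r₂⟫ ^ 2)
            * Real.exp (-π * ‖y‖ ^ 2 / σ ^ 2) := by
    intro y
    apply mul_le_mul_of_nonneg_right _ (Real.exp_pos _).le
    rw [hw_inner r₁ y, hw_inner r₂ y]
    rcases abs_cases (y r₁ * y r₂) with ⟨heq, _⟩ | ⟨heq, _⟩ <;> rw [heq] <;>
      nlinarith [sq_nonneg (y r₁ - y r₂), sq_nonneg (y r₁ + y r₂),
        mul_nonneg (sub_nonneg.mpr (hvr2 r₁)) (sq_nonneg ⟪y, v⟫),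
        mul_nonneg (sub_nonneg.mpr (hvr2 r₂)) (sq_nonneg ⟪y, v⟫),
        sq_nonneg (2 * v r₁ * ⟪y, v⟫ - y r₁), sq_nonneg (2 * v r₂ * ⟪y, v⟫ - y r₂)]
  -- term bounds
  obtain ⟨hintA, hbA⟩ := termA_bound hσ ht0 hd1 v hv r₁
  obtain ⟨hint1, hb1⟩ := termW_bound hσ ht0 v hv (w r₁) (hw_perp r₁) (hw_norm r₁)
  obtain ⟨hint2, hb2⟩ := termW_bound hσ ht0 v hv (w r₂) (hw_perp r₂) (hw_norm r₂)
  -- integrability of the dominating function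
  have hGint : Integrable (fun y : EuclideanSpace ℝ (Fin d) =>
      (2 * ⟪y, v⟫ ^ 2 + ⟪y, w r₁⟫ ^ 2 + ⟪y, w r₂⟫ ^ 2)
        * Real.exp (-π * ‖y‖ ^ 2 / σ ^ 2)) := by
    have hGeq : (fun y : EuclideanSpace ℝ (Fin d) =>
        (2 * ⟪y, v⟫ ^ 2 + ⟪y, w r₁⟫ ^ 2 + ⟪y, w r₂⟫ ^ 2)
          * Real.exp (-π * ‖y‖ ^ 2 / σ ^ 2))
        = fun y => 2 * (⟪y, v⟫ ^ 2 * Real.exp (-π * ‖y‖ ^ 2 / σ ^ 2))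
          + (⟪y, w r₁⟫ ^ 2 * Real.exp (-π * ‖y‖ ^ 2 / σ ^ 2)
            + ⟪y, w r₂⟫ ^ 2 * Real.exp (-π * ‖y‖ ^ 2 / σ ^ 2)) := by
      funext y; ring
    rw [hGeq]
    exact ((hintA.const_mul 2).add (hint1.add hint2))
  -- integrability of F
  have hFcont : Continuous (fun y : EuclideanSpace ℝ (Fin d) =>
      |y r₁ * y r₂| * Real.exp (-π * ‖y‖ ^ 2 / σ ^ 2)) := by
    have hc1 : Continuous fun y : EuclideanSpace ℝ (Fin d) => y r₁ :=
      (EuclideanSpace.proj r₁).continuous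
    have hc2 : Continuous fun y : EuclideanSpace ℝ (Fin d) => y r₂ :=
      (EuclideanSpace.proj r₂).continuous
    exact ((hc1.mul hc2).abs).mul
      ((continuous_const.mul ((continuous_norm.pow 2))).div_const _).rexp
  have hFint : Integrable (fun y : EuclideanSpace ℝ (Fin d) =>
      |y r₁ * y r₂| * Real.exp (-π * ‖y‖ ^ 2 / σ ^ 2)) := by
    refine hGint.mono' hFcont.aestronglyMeasurable (Filter.Eventually.of_forall fun y => ?_)
    rw [Real.norm_eq_abs, abs_of_nonneg (by positivity)]
    exact hpt y
  -- main chain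
  have hIle : ∫ y in {y : EuclideanSpace ℝ (Fin d) | t * σ ≤ ⟪y, v⟫},
      |y r₁ * y r₂| * Real.exp (-π * ‖y‖ ^ 2 / σ ^ 2)
      ≤ 96 * (σ ^ d * σ ^ 2) * Real.exp (-(2 * t ^ 2)) := by
    calc ∫ y in {y : EuclideanSpace ℝ (Fin d) | t * σ ≤ ⟪y, v⟫},
          |y r₁ * y r₂| * Real.exp (-π * ‖y‖ ^ 2 / σ ^ 2)
        ≤ ∫ y in {y : EuclideanSpace ℝ (Fin d) | t * σ ≤ ⟪y, v⟫},
            (2 * ⟪y, v⟫ ^ 2 + ⟪y, w r₁⟫ ^ 2 + ⟪y, w r₂⟫ ^ 2)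
              * Real.exp (-π * ‖y‖ ^ 2 / σ ^ 2) :=
          setIntegral_mono_on hFint.integrableOn hGint.integrableOn hA fun y _ => hpt y
      _ = ∫ y in {y : EuclideanSpace ℝ (Fin d) | t * σ ≤ ⟪y, v⟫},
            (2 * (⟪y, v⟫ ^ 2 * Real.exp (-π * ‖y‖ ^ 2 / σ ^ 2))
              + (⟪y, w r₁⟫ ^ 2 * Real.exp (-π * ‖y‖ ^ 2 / σ ^ 2)
                + ⟪y, w r₂⟫ ^ 2 * Real.exp (-π * ‖y‖ ^ 2 / σ ^ 2))) :=
          setIntegral_congr_fun hA fun y _ => by ring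
      _ = (∫ y in {y : EuclideanSpace ℝ (Fin d) | t * σ ≤ ⟪y, v⟫},
            2 * (⟪y, v⟫ ^ 2 * Real.exp (-π * ‖y‖ ^ 2 / σ ^ 2)))
          + ∫ y in {y : EuclideanSpace ℝ (Fin d) | t * σ ≤ ⟪y, v⟫},
            (⟪y, w r₁⟫ ^ 2 * Real.exp (-π * ‖y‖ ^ 2 / σ ^ 2)
              + ⟪y, w r₂⟫ ^ 2 * Real.exp (-π * ‖y‖ ^ 2 / σ ^ 2)) :=
          integral_add ((hintA.const_mul 2).integrableOn)
            (hint1.integrableOn.add hint2.integrableOn)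
      _ = (∫ y in {y : EuclideanSpace ℝ (Fin d) | t * σ ≤ ⟪y, v⟫},
            2 * (⟪y, v⟫ ^ 2 * Real.exp (-π * ‖y‖ ^ 2 / σ ^ 2)))
          + ((∫ y in {y : EuclideanSpace ℝ (Fin d) | t * σ ≤ ⟪y, v⟫},
            ⟪y, w r₁⟫ ^ 2 * Real.exp (-π * ‖y‖ ^ 2 / σ ^ 2))
          + ∫ y in {y : EuclideanSpace ℝ (Fin d) | t * σ ≤ ⟪y, v⟫},
            ⟪y, w r₂⟫ ^ 2 * Real.exp (-π * ‖y‖ ^ 2 / σ ^ 2)) := by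
          rw [integral_add (hint1.integrableOn) (hint2.integrableOn)]
      _ = 2 * (∫ y in {y : EuclideanSpace ℝ (Fin d) | t * σ ≤ ⟪y, v⟫},
            ⟪y, v⟫ ^ 2 * Real.exp (-π * ‖y‖ ^ 2 / σ ^ 2))
          + ((∫ y in {y : EuclideanSpace ℝ (Fin d) | t * σ ≤ ⟪y, v⟫},
            ⟪y, w r₁⟫ ^ 2 * Real.exp (-π * ‖y‖ ^ 2 / σ ^ 2))
          + ∫ y in {y : EuclideanSpace ℝ (Fin d) | t * σ ≤ ⟪y, v⟫},
            ⟪y, w r₂⟫ ^ 2 * Real.exp (-π * ‖y‖ ^ 2 / σ ^ 2)) := by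
          rw [integral_const_mul]
      _ ≤ 2 * (16 * (σ ^ d * σ ^ 2) * Real.exp (-(2 * t ^ 2)))
          + (32 * (σ ^ d * σ ^ 2) * Real.exp (-(2 * t ^ 2))
            + 32 * (σ ^ d * σ ^ 2) * Real.exp (-(2 * t ^ 2))) := by
          gcongr
      _ = 96 * (σ ^ d * σ ^ 2) * Real.exp (-(2 * t ^ 2)) := by ring
  have hσd : (0:ℝ) < σ ^ d := pow_pos hσ d
  have hmul : (1 / σ ^ d) * (96 * (σ ^ d * σ ^ 2) * Real.exp (-(2 * t ^ 2)))
      = 96 * σ ^ 2 * Real.exp (-(2 * t ^ 2)) := by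
    field_simp
  have hfinal : 96 * σ ^ 2 * Real.exp (-(2 * t ^ 2))
      < (σ ^ 2 / (16 * π)) * Real.exp (-t ^ 2) := by
    have hexp : Real.exp (-(2 * t ^ 2)) = Real.exp (-t ^ 2) * Real.exp (-t ^ 2) := by
      rw [← Real.exp_add]; ring_nf
    have h9 : Real.exp (-t ^ 2) ≤ Real.exp (-9) := by
      apply Real.exp_le_exp.mpr
      nlinarith
    have he9 : (1536:ℝ) * π < Real.exp 9 := by
      have h1 : Real.exp 1 ^ 9 = Real.exp 9 := by
        rw [Real.exp_one_pow]; norm_num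
      have h2 : (2.7182818283:ℝ) ^ 9 ≤ Real.exp 1 ^ 9 :=
        pow_le_pow_left₀ (by norm_num) Real.exp_one_gt_d9.le 9
      have h3 : (4838.4:ℝ) < 2.7182818283 ^ 9 := by norm_num
      have h4 : (1536:ℝ) * π < 4838.4 := by linarith [pi_lt_d2]
      linarith
    have hkey : 96 * Real.exp (-t ^ 2) < 1 / (16 * π) := by
      have hE : Real.exp 9 * Real.exp (-9) = 1 := by
        rw [← Real.exp_add]; norm_num
      have s1 : 1536 * π * Real.exp (-t ^ 2) ≤ 1536 * π * Real.exp (-9) :=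
        mul_le_mul_of_nonneg_left h9 (by positivity)
      have s2 : 1536 * π * Real.exp (-9) < Real.exp 9 * Real.exp (-9) :=
        mul_lt_mul_of_pos_right he9 (Real.exp_pos _)
      rw [lt_div_iff₀ (by positivity)]
      nlinarith
    calc 96 * σ ^ 2 * Real.exp (-(2 * t ^ 2))
        = (96 * Real.exp (-t ^ 2)) * (σ ^ 2 * Real.exp (-t ^ 2)) := by
          rw [hexp]; ring
      _ < (1 / (16 * π)) * (σ ^ 2 * Real.exp (-t ^ 2)) :=
          mul_lt_mul_of_pos_right hkey (by positivity)
      _ = (σ ^ 2 / (16 * π)) * Real.exp (-t ^ 2) := by ring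
  calc (1 / σ ^ d) * ∫ y in {y : EuclideanSpace ℝ (Fin d) | t * σ ≤ ⟪y, v⟫},
        |y r₁ * y r₂| * Real.exp (-π * ‖y‖ ^ 2 / σ ^ 2)
      ≤ (1 / σ ^ d) * (96 * (σ ^ d * σ ^ 2) * Real.exp (-(2 * t ^ 2))) :=
        mul_le_mul_of_nonneg_left hIle (by positivity)
    _ = 96 * σ ^ 2 * Real.exp (-(2 * t ^ 2)) := hmul
    _ < (σ ^ 2 / (16 * π)) * Real.exp (-t ^ 2) := hfinal
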